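/- If t is a Cauchy time function on a Lorentzian pre-length space, then every level set t⁻¹({s}) is a Cauchy set: every doubly-inextendible causal curve meets it exactly once. -/
import Mathlib


open Set Filter Topology MeasureTheory TopologicalSpace

/-- A Lorentzian pre-length space structure on a metric space `X`:
a preorder `causal` (≤), a transitive relation `chron` (≪) contained in `causal`,
and a lower semicontinuous time separation function `tau` satisfying the usual axioms. -/
structure LPLS (X : Type*) [MetricSpace X] where
  causal : X → X → Prop
  chron : X → X → Prop
  tau : X → X → ENNReal
  causal_refl : ∀ x, causal x x
  causal_trans : ∀ {x y z}, causal x y → causal y z → causal x z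
  chron_trans : ∀ {x y z}, chron x y → chron y z → chron x z
  chron_subset_causal : ∀ {x y}, chron x y → causal x y
  tau_lsc : LowerSemicontinuous fun p : X × X => tau p.1 p.2
  tau_pos : ∀ {x y}, chron x y → 0 < tau x y
  tau_eq_zero : ∀ {x y}, ¬ causal x y → tau x y = 0
  tau_superadd : ∀ {x y z}, causal x y → causal y z → tau x y + tau y z ≤ tau x z

variable {X : Type*} [MetricSpace X]

namespace LPLS

/-- chronological future `I⁺(p)` -/
def Iplus (L : LPLS X) (p : X) : Set X := {x | L.chron p x}
/-- chronological past `I⁻(p)` -/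
def Iminus (L : LPLS X) (p : X) : Set X := {x | L.chron x p}
/-- causal future `J⁺(p)` -/
def Jplus (L : LPLS X) (p : X) : Set X := {x | L.causal p x}
/-- causal past `J⁻(p)` -/
def Jminus (L : LPLS X) (p : X) : Set X := {x | L.causal x p}

def IplusSet (L : LPLS X) (S : Set X) : Set X := ⋃ p ∈ S, L.Iplus p
def IminusSet (L : LPLS X) (S : Set X) : Set X := ⋃ p ∈ S, L.Iminus p
def JplusSet (L : LPLS X) (S : Set X) : Set X := ⋃ p ∈ S, L.Jplus p
def JminusSet (L : LPLS X) (S : Set X) : Set X := ⋃ p ∈ S, L.Jminus p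

/-- a map is locally Lipschitz on a set `I` -/
def LocLipOn (I : Set ℝ) (γ : ℝ → X) : Prop :=
  ∀ s ∈ I, ∃ K : NNReal, ∃ U ∈ nhdsWithin s I, LipschitzOnWith K γ U

/-- future-directed causal curve with parameter domain `I`:
non-constant, locally Lipschitz and monotone with respect to the causal relation. -/
def IsCausalCurveOn (L : LPLS X) (I : Set ℝ) (γ : ℝ → X) : Prop :=
  (¬ ∀ s ∈ I, ∀ t ∈ I, γ s = γ t) ∧ LocLipOn I γ ∧
    ∀ ⦃s⦄, s ∈ I → ∀ ⦃t⦄, t ∈ I → s < t → L.causal (γ s) (γ t)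

/-- future-directed timelike curve with parameter domain `I`. -/
def IsTimelikeCurveOn (L : LPLS X) (I : Set ℝ) (γ : ℝ → X) : Prop :=
  (¬ ∀ s ∈ I, ∀ t ∈ I, γ s = γ t) ∧ LocLipOn I γ ∧
    ∀ ⦃s⦄, s ∈ I → ∀ ⦃t⦄, t ∈ I → s < t → L.chron (γ s) (γ t)

/-- causal path-connectedness -/
def CausallyPathConnected (L : LPLS X) : Prop :=
  (∀ p q : X, L.causal p q → p ≠ q →
    ∃ γ : ℝ → X, L.IsCausalCurveOn (Icc 0 1) γ ∧ γ 0 = p ∧ γ 1 = q) ∧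
  (∀ p q : X, L.chron p q →
    ∃ γ : ℝ → X, L.IsTimelikeCurveOn (Icc 0 1) γ ∧ γ 0 = p ∧ γ 1 = q)

/-- the relation `≤_U`: connected by a causal curve inside `U` -/
def causalIn (L : LPLS X) (U : Set X) (p q : X) : Prop :=
  ∃ γ : ℝ → X, L.IsCausalCurveOn (Icc 0 1) γ ∧ γ 0 = p ∧ γ 1 = q ∧
    ∀ s ∈ Icc (0:ℝ) 1, γ s ∈ U

/-- every point has a neighbourhood `U` such that `≤_U` is closed -/
def LocallyWeaklyCausallyClosed (L : LPLS X) : Prop :=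
  ∀ p : X, ∃ U ∈ 𝓝 p, IsClosed {z : X × X | L.causalIn U z.1 z.2}

/-- `d`-compatibility: local uniform bound for the `d`-arclength of causal curves -/
def DCompatible (L : LPLS X) : Prop :=
  ∀ p : X, ∃ U ∈ 𝓝 p, ∃ C : ℝ, ∀ (I : Set ℝ) (γ : ℝ → X),
    L.IsCausalCurveOn I γ → (∀ s ∈ I, γ s ∈ U) → eVariationOn γ I ≤ ENNReal.ofReal C

/-- a Lorentzian pre-length space with limit curves: causally path-connected,
locally weakly causally closed and `d`-compatible -/
def HasLimitCurves (L : LPLS X) : Prop :=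
  L.CausallyPathConnected ∧ L.LocallyWeaklyCausallyClosed ∧ L.DCompatible

def FutureApproximating (L : LPLS X) : Prop := ∀ p : X, L.Jplus p ⊆ closure (L.Iplus p)
def PastApproximating (L : LPLS X) : Prop := ∀ p : X, L.Jminus p ⊆ closure (L.Iminus p)
def Approximating (L : LPLS X) : Prop := L.FutureApproximating ∧ L.PastApproximating

/-- non-total imprisonment: a uniform arclength bound for causal curves in any compact set -/
def NonTotallyImprisoning (L : LPLS X) : Prop :=
  ∀ K : Set X, IsCompact K → ∃ C : ℝ, 0 < C ∧ ∀ (I : Set ℝ) (γ : ℝ → X),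
    L.IsCausalCurveOn I γ → (∀ s ∈ I, γ s ∈ K) → eVariationOn γ I ≤ ENNReal.ofReal C

/-- future-inextendible (future-directed) causal curve, parametrized on `[0,∞)`;
by the analogue of [KuSa, Lemma 3.12] inextendibility is captured by the
nonexistence of the limit at `+∞`. -/
def IsFutureInextCurve (L : LPLS X) (γ : ℝ → X) : Prop :=
  L.IsCausalCurveOn (Ici 0) γ ∧ ∀ p : X, ¬ Tendsto γ atTop (𝓝 p)

/-- past-inextendible (future-directed) causal curve, parametrized on `(-∞,0]`. -/
def IsPastInextCurve (L : LPLS X) (γ : ℝ → X) : Prop :=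
  L.IsCausalCurveOn (Iic 0) γ ∧ ∀ p : X, ¬ Tendsto γ atBot (𝓝 p)

/-- doubly-inextendible causal curve, parametrized on all of `ℝ`. -/
def IsDoublyInextCurve (L : LPLS X) (γ : ℝ → X) : Prop :=
  L.IsCausalCurveOn univ γ ∧ (∀ p : X, ¬ Tendsto γ atTop (𝓝 p)) ∧
    (∀ p : X, ¬ Tendsto γ atBot (𝓝 p))

/-- a Cauchy set: every doubly-inextendible causal curve meets it exactly once -/
def IsCauchySet (L : LPLS X) (S : Set X) : Prop :=
  ∀ γ : ℝ → X, L.IsDoublyInextCurve γ →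
    (∃ u : ℝ, γ u ∈ S) ∧ ∀ u v : ℝ, γ u ∈ S → γ v ∈ S → γ u = γ v

/-- volume of the open `r`-thickening of `I⁻(p)` -/
noncomputable def Vminus (L : LPLS X) [MeasurableSpace X] (μ : Measure X) (r : ℝ) (p : X) : ℝ :=
  (μ (Metric.thickening r (L.Iminus p))).toReal

/-- the averaged past volume function `t⁻(p) = ∫₀¹ V⁻ᵣ(p) dr` (without the sign) -/
noncomputable def tminus (L : LPLS X) [MeasurableSpace X] (μ : Measure X) (p : X) : ℝ :=
  ∫ r in Ioo (0:ℝ) 1, L.Vminus μ r p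

/-- full support: every nonempty open set has positive measure -/
def FullSupport [MeasurableSpace X] (μ : Measure X) : Prop :=
  ∀ U : Set X, IsOpen U → U.Nonempty → 0 < μ U

end LPLS

/-- Level sets of a Cauchy time function are Cauchy sets. -/
theorem LPLS.levelSet_isCauchySet {X : Type*} [MetricSpace X]
    (L : LPLS X) (t : X → ℝ) (ht : Continuous t)
    (htime : ∀ p q : X, L.causal p q → p ≠ q → t p < t q)
    (hcauchy : ∀ γ : ℝ → X, L.IsDoublyInextCurve γ → range (t ∘ γ) = univ) :
    ∀ s : ℝ, L.IsCauchySet (t ⁻¹' {s}) := by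
  intro s γ hγ
  constructor
  · have hr : s ∈ range (t ∘ γ) := (hcauchy γ hγ) ▸ mem_univ s
    obtain ⟨u, hu⟩ := hr
    exact ⟨u, hu⟩
  · intro u v hu hv
    simp only [mem_preimage, mem_singleton_iff] at hu hv
    by_contra h
    rcases lt_trichotomy u v with hlt | heq | hgt
    · have hc := hγ.1.2.2 (mem_univ u) (mem_univ v) hlt
      have := htime _ _ hc h
      linarith
    · exact h (heq ▸ rfl)
    · have hc := hγ.1.2.2 (mem_univ v) (mem_univ u) hgt
      have := htime _ _ hc (Ne.symm h)
      linarith
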